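/- Let D_t ≻ 0 be positive definite d×d matrices satisfying D_t = (D_{t-1}⁻¹ + c⁻¹I)⁻¹ + x_t x_tᵀ for t ≥ 1 with c > 0, x_t ∈ ℝ^d. Then for each t, x_tᵀ D_t⁻¹ x_t ≤ ln(det D_t / det D_{t-1}) + ln det(I + c⁻¹ D_{t-1}). -/

import Mathlib

open Matrix

lemma trace_eq_sum_eig {d : ℕ} {B : Matrix (Fin d) (Fin d) ℝ} (hB : B.IsHermitian) :
    B.trace = ∑ i, hB.eigenvalues i := by
  conv_lhs => rw [hB.spectral_theorem, Unitary.conjStarAlgAut_apply]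
  rw [trace_mul_comm, ← mul_assoc]
  have : (star (hB.eigenvectorUnitary : Matrix (Fin d) (Fin d) ℝ)) *
      (hB.eigenvectorUnitary : Matrix (Fin d) (Fin d) ℝ) = 1 :=
    (Matrix.mem_unitaryGroup_iff').mp (hB.eigenvectorUnitary).2
  rw [this, one_mul, trace_diagonal]
  simp

lemma smul_posSemidef {d : ℕ} {a : ℝ} (ha : 0 ≤ a) {M : Matrix (Fin d) (Fin d) ℝ}
    (hM : M.PosSemidef) : (a • M).PosSemidef := by
  refine PosSemidef.of_dotProduct_mulVec_nonneg ?_ fun x => ?_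
  · unfold Matrix.IsHermitian
    rw [conjTranspose_smul, hM.1.eq]
    simp
  · rw [smul_mulVec, dotProduct_smul]
    simpa using mul_nonneg ha (hM.dotProduct_mulVec_nonneg x)

open scoped MatrixOrder in
lemma key_ineq {d : ℕ} {A M : Matrix (Fin d) (Fin d) ℝ} (hA : A.PosDef) (hM : M.PosDef)
    (v : Fin d → ℝ) (h : M = A + vecMulVec v v) :
    v ⬝ᵥ (M⁻¹ *ᵥ v) ≤ Real.log (M.det / A.det) := by
  set S := CFC.sqrt A with hS
  have hSS : S * S = A := CFC.sqrt_mul_sqrt_self A (Matrix.nonneg_iff_posSemidef.mpr hA.posSemidef)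
  have hShermit : S.IsHermitian := (Matrix.nonneg_iff_posSemidef.mp (CFC.sqrt_nonneg A)).1
  have hdetS : S.det * S.det = A.det := by rw [← det_mul, hSS]
  have hdetA : 0 < A.det := hA.det_pos
  have hdetM : 0 < M.det := hM.det_pos
  have hdetS0 : S.det ≠ 0 := fun h0 => by simp [h0] at hdetS; exact hdetA.ne' hdetS.symm
  set B := S * M⁻¹ * S with hB
  have hMinv : M⁻¹.PosDef := hM.inv
  -- B is positive definite
  have hBpd : B.PosDef := by
    refine PosDef.of_dotProduct_mulVec_pos ?_ fun x hx => ?_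
    · unfold Matrix.IsHermitian
      rw [hB, conjTranspose_mul, conjTranspose_mul, hShermit.eq, hMinv.1.eq, mul_assoc]
    · have hSx : S *ᵥ x ≠ 0 := by
        intro h0
        apply hx
        have := congrArg (fun y => S⁻¹ *ᵥ y) h0
        simpa [mulVec_mulVec, Matrix.nonsing_inv_mul S (by simpa using hdetS0)] using this
      show 0 < star x ⬝ᵥ (S * M⁻¹ * S) *ᵥ x
      rw [show S * M⁻¹ * S = Sᴴ * M⁻¹ * S from by rw [hShermit.eq]]
      simpa only [star_mulVec, dotProduct_mulVec, vecMul_vecMul] using hMinv.dotProduct_mulVec_pos hSx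
  have hBH := hBpd.1
  -- determinant of B
  have hdetB : B.det = A.det / M.det := by
    rw [hB, det_mul, det_mul, det_nonsing_inv, Ring.inverse_eq_inv']
    field_simp [hdetM.ne']
    rw [sq, hdetS]
  -- trace identities
  have h1 : v ⬝ᵥ (M⁻¹ *ᵥ v) = (M⁻¹ * vecMulVec v v).trace := by
    simp only [trace, diag, mul_apply, vecMulVec_apply, dotProduct, mulVec, Finset.mul_sum]
    exact Finset.sum_congr rfl fun i _ => Finset.sum_congr rfl fun j _ => by ring
  have h2 : (M⁻¹ * vecMulVec v v).trace = (d : ℝ) - B.trace := by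
    have hv : vecMulVec v v = M - A := by rw [h, add_sub_cancel_left]
    have hMM : M⁻¹ * M = 1 := Matrix.nonsing_inv_mul M hdetM.ne'.isUnit
    have : M⁻¹ * A = M⁻¹ * (S * S) := by rw [hSS]
    rw [hv, mul_sub, hMM, trace_sub, trace_one, this, ← mul_assoc, trace_mul_comm, hB,
      mul_assoc]
    simp
  -- eigenvalue bound
  set lam := hBH.eigenvalues with hlam
  have hpos : ∀ i, 0 < lam i := hBpd.eigenvalues_pos
  have htr : B.trace = ∑ i, lam i := trace_eq_sum_eig hBH
  have hdet : B.det = ∏ i, lam i := by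
    have := hBH.det_eq_prod_eigenvalues
    simpa using this
  have hstep : (d : ℝ) - ∑ i, lam i ≤ - Real.log (∏ i, lam i) := by
    rw [Real.log_prod (fun i _ => (hpos i).ne'), ← Finset.sum_neg_distrib]
    have : (d : ℝ) = ∑ _i : Fin d, (1 : ℝ) := by simp
    rw [this, ← Finset.sum_sub_distrib]
    refine Finset.sum_le_sum fun i _ => ?_
    have := Real.log_le_sub_one_of_pos (hpos i)
    linarith
  calc v ⬝ᵥ (M⁻¹ *ᵥ v) = (d : ℝ) - B.trace := by rw [h1, h2]
    _ ≤ - Real.log B.det := by rw [htr, hdet]; exact hstep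
    _ = Real.log (M.det / A.det) := by
        rw [hdetB, Real.log_div hdetA.ne' hdetM.ne', Real.log_div hdetM.ne' hdetA.ne']
        ring

theorem stmt_5 (d : ℕ) (c : ℝ) (hc : 0 < c)
    (x : ℕ → Fin d → ℝ) (D : ℕ → Matrix (Fin d) (Fin d) ℝ)
    (hpd : ∀ t, (D t).PosDef)
    (hrec : ∀ t, 1 ≤ t →
      D t = ((D (t - 1))⁻¹ + c⁻¹ • (1 : Matrix (Fin d) (Fin d) ℝ))⁻¹
              + vecMulVec (x t) (x t)) :
    ∀ t, 1 ≤ t →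
      x t ⬝ᵥ ((D t)⁻¹ *ᵥ x t)
        ≤ Real.log ((D t).det / (D (t - 1)).det)
          + Real.log ((1 : Matrix (Fin d) (Fin d) ℝ) + c⁻¹ • D (t - 1)).det := by
  intro t ht
  set Dp := D (t - 1) with hDp
  have hDppd : Dp.PosDef := hpd _
  have hc' : (0:ℝ) < c⁻¹ := inv_pos.mpr hc
  set K := Dp⁻¹ + c⁻¹ • (1 : Matrix (Fin d) (Fin d) ℝ) with hK
  have hKpd : K.PosDef :=
    hDppd.inv.add_posSemidef (smul_posSemidef hc'.le Matrix.PosSemidef.one)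
  have hApd : K⁻¹.PosDef := hKpd.inv
  have hMpd : (D t).PosDef := hpd t
  have key := key_ineq hApd hMpd (x t) (hrec t ht)
  -- relate determinants
  have hdetDp : 0 < Dp.det := hDppd.det_pos
  have hdetK : 0 < K.det := hKpd.det_pos
  have hdetM : 0 < (D t).det := hMpd.det_pos
  have hfact : (1 : Matrix (Fin d) (Fin d) ℝ) + c⁻¹ • Dp = Dp * K := by
    rw [hK, mul_add, Matrix.mul_nonsing_inv _ hdetDp.ne'.isUnit, mul_smul_comm, mul_one]
  have hdetfact : ((1 : Matrix (Fin d) (Fin d) ℝ) + c⁻¹ • Dp).det = Dp.det * K.det := by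
    rw [hfact, det_mul]
  have hdetKinv : (K⁻¹).det = K.det⁻¹ := by
    rw [det_nonsing_inv, Ring.inverse_eq_inv']
  have : Real.log ((D t).det / (K⁻¹).det)
      = Real.log ((D t).det / Dp.det)
        + Real.log ((1 : Matrix (Fin d) (Fin d) ℝ) + c⁻¹ • Dp).det := by
    rw [hdetKinv, hdetfact, div_eq_mul_inv, inv_inv,
      Real.log_mul hdetM.ne' hdetK.ne',
      Real.log_mul hdetDp.ne' hdetK.ne', Real.log_div hdetM.ne' hdetDp.ne']
    ring
  rw [← this]
  exact key
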